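/- Approximation error of a minimum-norm solution: Let b = A x* + e with supp(x*) = Λ, |Λ| = k, and let Γ be an index set of size k such that A_Γ^T A_Γ is invertible. Define x̄ by x̄_Γ = A_Γ^† b and x̄_{Γ^C} = 0, where A_Γ^† = (A_Γ^T A_Γ)^{-1} A_Γ^T. Then ‖x̄ − x*‖² ≤ ( ‖A_Γ^† A_{Λ∖Γ} x*_{Λ∖Γ}‖ + ‖A_Γ^† e‖ )² + ‖x*_{Λ∖Γ}‖². -/

import Mathlib

open scoped Classical
open Finset Matrix

/-- Euclidean norm of a finitely indexed real vector. -/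
noncomputable def euclNorm {m : Type*} [Fintype m] (x : m → ℝ) : ℝ :=
  Real.sqrt (∑ i, (x i) ^ 2)

/-- The column submatrix of `A` indexed by the finset `Γ`. -/
def colSub {n N : ℕ} (A : Matrix (Fin n) (Fin N) ℝ) (Γ : Finset (Fin N)) :
    Matrix (Fin n) Γ ℝ := fun i j => A i j.1

/-- The Moore–Penrose pseudoinverse `A_Γ^† = (A_Γᵀ A_Γ)⁻¹ A_Γᵀ`. -/
noncomputable def pinv {n N : ℕ} (A : Matrix (Fin n) (Fin N) ℝ) (Γ : Finset (Fin N)) :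
    Matrix Γ (Fin n) ℝ := ((colSub A Γ)ᵀ * colSub A Γ)⁻¹ * (colSub A Γ)ᵀ

/-- triangle-inequality style bound: ∑ (u+v)² ≤ (√∑u² + √∑v²)². -/
lemma sum_sq_add_le {m : Type*} [Fintype m] (u v : m → ℝ) :
    ∑ j, (u j + v j) ^ 2 ≤ (euclNorm u + euclNorm v) ^ 2 := by
  have hcs : (∑ j, u j * v j) ≤ euclNorm u * euclNorm v := by
    have h := Finset.sum_mul_sq_le_sq_mul_sq Finset.univ u v
    have h1 : (∑ j, u j * v j) ≤ |∑ j, u j * v j| := le_abs_self _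
    have h2 : |∑ j, u j * v j| = Real.sqrt ((∑ j, u j * v j) ^ 2) := by
      rw [Real.sqrt_sq_eq_abs]
    calc (∑ j, u j * v j) ≤ Real.sqrt ((∑ j, u j * v j) ^ 2) := by rw [← h2]; exact h1
      _ ≤ Real.sqrt ((∑ j, u j ^ 2) * ∑ j, v j ^ 2) := Real.sqrt_le_sqrt h
      _ = euclNorm u * euclNorm v := by
          rw [Real.sqrt_mul (by positivity)]; rfl
  have hu : euclNorm u ^ 2 = ∑ j, u j ^ 2 := Real.sq_sqrt (by positivity)
  have hv : euclNorm v ^ 2 = ∑ j, v j ^ 2 := Real.sq_sqrt (by positivity)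
  have : ∑ j, (u j + v j) ^ 2 = (∑ j, u j ^ 2) + 2 * (∑ j, u j * v j) + ∑ j, v j ^ 2 := by
    rw [Finset.mul_sum, ← Finset.sum_add_distrib, ← Finset.sum_add_distrib]
    exact Finset.sum_congr rfl fun j _ => by ring
  rw [this, add_sq, hu, hv]
  nlinarith [hcs]

/-- approximation error of the minimum-norm solution on `Γ`. -/
theorem min_norm_solution_error_bound {n N k : ℕ}
    (A : Matrix (Fin n) (Fin N) ℝ) (e : Fin n → ℝ) (xstar : Fin N → ℝ)
    (Λ Γ : Finset (Fin N)) (hΛ : ∀ i, xstar i ≠ 0 ↔ i ∈ Λ)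
    (hΛcard : Λ.card = k) (hΓcard : Γ.card = k)
    (hinv : IsUnit ((colSub A Γ)ᵀ * colSub A Γ))
    (b : Fin n → ℝ) (hb : b = A.mulVec xstar + e)
    (xb : Fin N → ℝ) (hsupp : ∀ i ∉ Γ, xb i = 0)
    (hxb : ∀ j : Γ, xb j.1 = (pinv A Γ).mulVec b j) :
    ∑ i, (xb i - xstar i) ^ 2
      ≤ (euclNorm ((pinv A Γ * colSub A (Λ \ Γ)).mulVec fun j : ↥(Λ \ Γ) => xstar j.1)
            + euclNorm ((pinv A Γ).mulVec e)) ^ 2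
        + ∑ j : ↥(Λ \ Γ), (xstar j.1) ^ 2 := by
  set u := (pinv A Γ * colSub A (Λ \ Γ)).mulVec fun j : ↥(Λ \ Γ) => xstar j.1 with hu
  set v := (pinv A Γ).mulVec e with hv
  -- decompose A x* on columns
  have hsplit : A.mulVec xstar
      = (colSub A Γ).mulVec (fun j : Γ => xstar j.1)
        + (colSub A (Λ \ Γ)).mulVec (fun j : ↥(Λ \ Γ) => xstar j.1) := by
    funext i
    simp only [Pi.add_apply, Matrix.mulVec, dotProduct, colSub]
    rw [Finset.sum_coe_sort Γ (fun l => A i l * xstar l),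
        Finset.sum_coe_sort (Λ \ Γ) (fun l => A i l * xstar l),
        ← Finset.sum_union (Finset.disjoint_sdiff)]
    symm
    apply Finset.sum_subset (Finset.subset_univ _)
    intro l _ hl
    have hlΓ : l ∉ Γ := fun h => hl (Finset.mem_union_left _ h)
    have hlΛ : l ∉ Λ := by
      intro h
      exact hl (Finset.mem_union_right _ (Finset.mem_sdiff.mpr ⟨h, hlΓ⟩))
    have : xstar l = 0 := by
      by_contra hx; exact hlΛ ((hΛ l).mp hx)
    simp [this]
  have hid : pinv A Γ * colSub A Γ = 1 := by
    rw [pinv, Matrix.mul_assoc]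
    exact Matrix.nonsing_inv_mul _ ((Matrix.isUnit_iff_isUnit_det _).mp hinv)
  -- on Γ, the error equals u + v
  have key : ∀ j : Γ, xb j.1 - xstar j.1 = u j + v j := by
    intro j
    have : (pinv A Γ).mulVec b = (fun j : Γ => xstar j.1) + u + v := by
      rw [hb, Matrix.mulVec_add, hsplit, Matrix.mulVec_add,
          Matrix.mulVec_mulVec, Matrix.mulVec_mulVec, hid, Matrix.one_mulVec, hu, hv]
    rw [hxb j, this]
    simp only [Pi.add_apply]
    ring
  -- split the full sum
  have hsum : ∑ i, (xb i - xstar i) ^ 2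
      = (∑ j : Γ, (u j + v j) ^ 2) + ∑ i ∈ Γᶜ, (xstar i) ^ 2 := by
    rw [← Finset.sum_add_sum_compl Γ]
    congr 1
    · rw [← Finset.sum_coe_sort Γ (fun i => (xb i - xstar i) ^ 2)]
      exact Finset.sum_congr rfl fun j _ => by rw [key j]
    · apply Finset.sum_congr rfl
      intro i hi
      rw [hsupp i (Finset.mem_compl.mp hi)]
      ring
  have htail : ∑ i ∈ Γᶜ, (xstar i) ^ 2 = ∑ j : ↥(Λ \ Γ), (xstar j.1) ^ 2 := by
    rw [Finset.sum_coe_sort (Λ \ Γ) (fun l => xstar l ^ 2)]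
    symm
    apply Finset.sum_subset
    · intro l hl
      exact Finset.mem_compl.mpr (Finset.mem_sdiff.mp hl).2
    · intro l hl hl'
      have hlΓ := Finset.mem_compl.mp hl
      have : l ∉ Λ := fun h => hl' (Finset.mem_sdiff.mpr ⟨h, hlΓ⟩)
      have hx : xstar l = 0 := by
        by_contra hx; exact this ((hΛ l).mp hx)
      simp [hx]
  rw [hsum, htail]
  exact add_le_add_left (sum_sq_add_le u v) _
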